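/- Let f : M → ℝ^{n+p} be a conformal immersion with conformal factor φ > 0, and let F = φ^{-1} (Ψ ∘ f) be its light-cone representative, where Ψ : ℝ^{n+p} → 𝔼^{n+p} ⊂ 𝕍^{n+p+1} ⊂ 𝕃^{n+p+2} is the isometry onto the Euclidean slice of the light cone. Then F is an isometric immersion into 𝕃^{n+p+2} with respect to the original metric on M: ⟨dF(X), dF(Y)⟩ = ⟨X,Y⟩_M for all tangent vectors X, Y. -/

import Mathlib

open scoped RealInnerProductSpace

/-- The Lorentzian inner product of signature `(m+1, 1)` on `𝕃^{m+2} = ℝ^{m+2}`. -/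
def minkowski (m : ℕ) (x y : Fin (m + 2) → ℝ) : ℝ :=
  (∑ i : Fin (m + 1), x i.castSucc * y i.castSucc)
    - x (Fin.last (m + 1)) * y (Fin.last (m + 1))

lemma mink_add_left {m : ℕ} (x y z : Fin (m + 2) → ℝ) :
    minkowski m (x + y) z = minkowski m x z + minkowski m y z := by
  simp [minkowski, add_mul, Finset.sum_add_distrib]; ring

lemma mink_smul_left {m : ℕ} (r : ℝ) (x z : Fin (m + 2) → ℝ) :
    minkowski m (r • x) z = r * minkowski m x z := by
  simp [minkowski, mul_sub, Finset.mul_sum, mul_assoc]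

lemma mink_comm {m : ℕ} (x z : Fin (m + 2) → ℝ) :
    minkowski m x z = minkowski m z x := by
  simp [minkowski, mul_comm]

lemma mink_sub_left {m : ℕ} (x y z : Fin (m + 2) → ℝ) :
    minkowski m (x - y) z = minkowski m x z - minkowski m y z := by
  have h := mink_add_left x (-y) z
  have h2 := mink_smul_left (-1 : ℝ) y z
  simp only [neg_smul, one_smul, neg_one_mul] at h2
  simpa [sub_eq_add_neg, h2] using h

lemma mink_add_right {m : ℕ} (x y z : Fin (m + 2) → ℝ) :
    minkowski m z (x + y) = minkowski m z x + minkowski m z y := by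
  rw [mink_comm, mink_add_left, mink_comm x z, mink_comm y z]

lemma mink_smul_right {m : ℕ} (r : ℝ) (x z : Fin (m + 2) → ℝ) :
    minkowski m z (r • x) = r * minkowski m z x := by
  rw [mink_comm, mink_smul_left, mink_comm]

lemma mink_sub_right {m : ℕ} (x y z : Fin (m + 2) → ℝ) :
    minkowski m z (x - y) = minkowski m z x - minkowski m z y := by
  rw [mink_comm, mink_sub_left, mink_comm x z, mink_comm y z]

/-- if `f : M → ℝ^{n+p}` is a conformal immersion with conformal factor
`φ > 0` (formalized in a chart: `M` is an open domain `E` carrying the metric `gM`, and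
`⟨df(X), df(Y)⟩ = φ² gM(X,Y)`), and `Ψ` is the isometric embedding of `ℝ^{n+p}` onto the
Euclidean slice of the light cone of `𝕃^{n+p+2}`, then the light-cone representative
`F = φ⁻¹ (Ψ ∘ f)` is an isometric immersion with respect to the original metric:
`⟨dF(X), dF(Y)⟩ = gM(X,Y)`. -/
theorem lightcone_representative_isometric
    {E : Type*} [NormedAddCommGroup E] [NormedSpace ℝ E] {n p : ℕ}
    (gM : E → E → E → ℝ)
    (f : E → EuclideanSpace ℝ (Fin (n + p))) (hf : Differentiable ℝ f)
    (φ : E → ℝ) (hφ : Differentiable ℝ φ) (hφpos : ∀ x, 0 < φ x)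
    (hconf : ∀ x u v, ⟪fderiv ℝ f x u, fderiv ℝ f x v⟫ = (φ x) ^ 2 * gM x u v)
    (w x₀ : Fin (n + p + 2) → ℝ)
    (hw : minkowski (n + p) w w = 0) (hwne : w ≠ 0)
    (hx₀ : minkowski (n + p) x₀ x₀ = 0) (hx₀w : minkowski (n + p) x₀ w = 1)
    (A : EuclideanSpace ℝ (Fin (n + p)) →ₗ[ℝ] (Fin (n + p + 2) → ℝ))
    (hA : ∀ u v, minkowski (n + p) (A u) (A v) = ⟪u, v⟫)
    (hAx₀ : ∀ u, minkowski (n + p) (A u) x₀ = 0)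
    (hAw : ∀ u, minkowski (n + p) (A u) w = 0)
    (Ψ : EuclideanSpace ℝ (Fin (n + p)) → (Fin (n + p + 2) → ℝ))
    (hΨ : ∀ y, Ψ y = x₀ + A y - ((1 / 2 : ℝ) * ‖y‖ ^ 2) • w)
    (F : E → (Fin (n + p + 2) → ℝ)) (hF : ∀ x, F x = (φ x)⁻¹ • Ψ (f x)) :
    ∀ x u v, minkowski (n + p) (fderiv ℝ F x u) (fderiv ℝ F x v) = gM x u v := by
  intro x u v
  have hφne : φ x ≠ 0 := (hφpos x).ne'
  -- derivative of ψ = φ⁻¹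
  have hψ : HasFDerivAt (fun z => (φ z)⁻¹) ((-(φ x ^ 2)⁻¹) • fderiv ℝ φ x) x :=
    (hasDerivAt_inv hφne).comp_hasFDerivAt x (hφ x).hasFDerivAt
  have hfd : HasFDerivAt f (fderiv ℝ f x) x := (hf x).hasFDerivAt
  have hAf : HasFDerivAt (fun z => A (f z))
      ((LinearMap.toContinuousLinearMap A).comp (fderiv ℝ f x)) x :=
    ((LinearMap.toContinuousLinearMap A).hasFDerivAt).comp x hfd
  have hnorm : HasFDerivAt (fun z => ((1 / 2 : ℝ) * ‖f z‖ ^ 2))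
      ((1 / 2 : ℝ) • ((fderivInnerCLM ℝ (f x, f x)).comp
        ((fderiv ℝ f x).prod (fderiv ℝ f x)))) x := by
    have h0 : HasFDerivAt (fun z => (⟪f z, f z⟫ : ℝ))
        ((fderivInnerCLM ℝ (f x, f x)).comp ((fderiv ℝ f x).prod (fderiv ℝ f x))) x :=
      hfd.inner ℝ hfd
    have h1 := h0.const_smul (1 / 2 : ℝ)
    simp only [real_inner_self_eq_norm_sq, smul_eq_mul] at h1 ⊢
    exact h1
  have hGfun : (fun z => Ψ (f z)) =
      fun z => x₀ + A (f z) - ((1 / 2 : ℝ) * ‖f z‖ ^ 2) • w :=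
    funext fun z => hΨ (f z)
  have hG : HasFDerivAt (fun z => Ψ (f z))
      ((0 + (LinearMap.toContinuousLinearMap A).comp (fderiv ℝ f x)) -
        ((1 / 2 : ℝ) • ((fderivInnerCLM ℝ (f x, f x)).comp
          ((fderiv ℝ f x).prod (fderiv ℝ f x)))).smulRight w) x := by
    rw [hGfun]
    exact ((hasFDerivAt_const x₀ x).add hAf).sub (hnorm.smul_const w)
  have hFfun : F = fun z => (φ z)⁻¹ • Ψ (f z) := funext hF
  have hFd : HasFDerivAt F
      ((φ x)⁻¹ • ((0 + (LinearMap.toContinuousLinearMap A).comp (fderiv ℝ f x)) -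
        ((1 / 2 : ℝ) • ((fderivInnerCLM ℝ (f x, f x)).comp
          ((fderiv ℝ f x).prod (fderiv ℝ f x)))).smulRight w)
        + ((-(φ x ^ 2)⁻¹) • fderiv ℝ φ x).smulRight (Ψ (f x))) x := by
    rw [hFfun]; exact hψ.smul hG
  have key : ∀ t, fderiv ℝ F x t =
      ((-(φ x ^ 2)⁻¹) * fderiv ℝ φ x t) • (Ψ (f x))
        + (φ x)⁻¹ • (A (fderiv ℝ f x t) - (⟪f x, fderiv ℝ f x t⟫ : ℝ) • w) := by
    intro t
    rw [hFd.fderiv]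
    simp [fderivInnerCLM_apply, real_inner_comm (f x)]
    module
  -- auxiliary symmetric versions
  have hAx₀' : ∀ k, minkowski (n + p) x₀ (A k) = 0 := fun k => by
    rw [mink_comm]; exact hAx₀ k
  have hwA : ∀ k, minkowski (n + p) w (A k) = 0 := fun k => by
    rw [mink_comm]; exact hAw k
  have hwx₀ : minkowski (n + p) w x₀ = 1 := by rw [mink_comm]; exact hx₀w
  have hc : (⟪fderiv ℝ f x u, fderiv ℝ f x v⟫ : ℝ) = (φ x) ^ 2 * gM x u v := hconf x u v
  rw [key u, key v]
  simp only [hΨ]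
  simp only [mink_add_left, mink_add_right, mink_sub_left, mink_sub_right,
    mink_smul_left, mink_smul_right]
  simp only [hA, hAx₀, hAw, hAx₀', hwA, hw, hx₀, hx₀w, hwx₀,
    real_inner_self_eq_norm_sq]
  rw [hc]
  have hsum : (∑ i : Fin (n + p), f x i * (fderiv ℝ f x) u i)
      = ∑ i : Fin (n + p), (fderiv ℝ f x) u i * f x i :=
    Finset.sum_congr rfl fun i _ => mul_comm _ _
  field_simp
  rw [real_inner_comm (f x) ((fderiv ℝ f x) u)]
  ring
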